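/- Suppose lim_{n→∞} α_n = 0. Then Σ_n → 0 (entrywise, equivalently in any matrix norm) as n → ∞. In other words, any bandwidth modulation tending to zero forces the regularized particle filter covariance to vanish asymptotically. -/

import Mathlib

open Matrix Finset Filter

lemma rpf_posdef_smul {d : ℕ} {A : Matrix (Fin d) (Fin d) ℝ} (hA : A.PosDef) {c : ℝ}
    (hc : 0 < c) : (c • A).PosDef := by
  refine Matrix.PosDef.of_dotProduct_mulVec_pos ?_ (fun x hx => ?_)
  · unfold Matrix.IsHermitian
    rw [conjTranspose_smul, hA.isHermitian]
    simp
  · rw [smul_mulVec, dotProduct_smul, smul_eq_mul]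
    exact mul_pos hc (hA.dotProduct_mulVec_pos hx)

lemma rpf_single_quad {d : ℕ} (A : Matrix (Fin d) (Fin d) ℝ) (i j : Fin d) :
    (Pi.single i 1 : Fin d → ℝ) ⬝ᵥ (A *ᵥ Pi.single j 1) = A i j := by
  simp [dotProduct, Matrix.mulVec, Pi.single_apply, mul_ite, ite_mul]

lemma rpf_dot_self_nonneg {d : ℕ} (x : Fin d → ℝ) : 0 ≤ x ⬝ᵥ x :=
  Finset.sum_nonneg fun i _ => mul_self_nonneg _

lemma rpf_quad_lower {d : ℕ} (hd : 0 < d) {A : Matrix (Fin d) (Fin d) ℝ} (hA : A.PosDef) :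
    ∃ m > 0, ∀ x : Fin d → ℝ, m * (x ⬝ᵥ x) ≤ x ⬝ᵥ (A *ᵥ x) := by
  set K : Set (Fin d → ℝ) := {x | x ⬝ᵥ x = 1} with hK
  have hg : Continuous fun x : Fin d → ℝ => x ⬝ᵥ x := by
    simp only [dotProduct]
    exact continuous_finset_sum _ fun i _ => (continuous_apply i).mul (continuous_apply i)
  have hf : Continuous fun x : Fin d → ℝ => x ⬝ᵥ (A *ᵥ x) := by
    simp only [dotProduct, Matrix.mulVec]
    exact continuous_finset_sum _ fun i _ => (continuous_apply i).mul
      (continuous_finset_sum _ fun j _ => continuous_const.mul (continuous_apply j))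
  have hKc : IsCompact K := by
    apply Metric.isCompact_of_isClosed_isBounded
    · exact IsClosed.preimage hg isClosed_singleton
    · rw [Metric.isBounded_iff_subset_closedBall 0]
      refine ⟨1, fun x hx => ?_⟩
      simp only [Metric.mem_closedBall, dist_zero_right]
      rw [pi_norm_le_iff_of_nonneg zero_le_one]
      intro i
      rw [Real.norm_eq_abs, abs_le_one_iff_mul_self_le_one]
      calc x i * x i ≤ x ⬝ᵥ x :=
            Finset.single_le_sum (fun j _ => mul_self_nonneg (x j)) (Finset.mem_univ i)
        _ = 1 := hx
  have hKne : K.Nonempty := by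
    refine ⟨Pi.single ⟨0, hd⟩ 1, ?_⟩
    simp [hK, dotProduct, Pi.single_apply]
  obtain ⟨z, hzK, hz⟩ := hKc.exists_isMinOn hKne hf.continuousOn
  have hz0 : z ≠ 0 := by
    intro h
    rw [hK] at hzK
    simp [h] at hzK
  have hm : 0 < z ⬝ᵥ (A *ᵥ z) := by
    have := hA.dotProduct_mulVec_pos hz0
    simpa using this
  refine ⟨z ⬝ᵥ (A *ᵥ z), hm, fun x => ?_⟩
  by_cases hx : x = 0
  · simp [hx]
  have hs : 0 < x ⬝ᵥ x := by
    obtain ⟨i, hi⟩ := Function.ne_iff.mp hx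
    exact Finset.sum_pos' (fun j _ => mul_self_nonneg _)
      ⟨i, Finset.mem_univ i, mul_self_pos.mpr (by simpa using hi)⟩
  set c : ℝ := (Real.sqrt (x ⬝ᵥ x))⁻¹ with hc
  have hsq : c * c * (x ⬝ᵥ x) = 1 := by
    rw [hc, ← mul_inv]
    rw [Real.mul_self_sqrt hs.le]
    exact inv_mul_cancel₀ hs.ne'
  have hyK : (c • x) ∈ K := by
    simp only [hK, Set.mem_setOf_eq, smul_dotProduct, dotProduct_smul, smul_eq_mul]
    rw [← mul_assoc]; exact hsq
  have hmin := hz hyK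
  simp only [Set.mem_setOf_eq] at hmin
  have hfy : (c • x) ⬝ᵥ (A *ᵥ (c • x)) = c * c * (x ⬝ᵥ (A *ᵥ x)) := by
    rw [mulVec_smul, smul_dotProduct, dotProduct_smul, smul_eq_mul, smul_eq_mul, mul_assoc]
  rw [hfy] at hmin
  -- hmin : z ⬝ᵥ (A *ᵥ z) ≤ c * c * (x ⬝ᵥ (A *ᵥ x)),  hsq : c*c*(x⬝ᵥx)=1
  have hcc : 0 < c * c := by
    have : c * c * (x ⬝ᵥ x) = 1 := hsq
    nlinarith [hs]
  nlinarith [hmin, hsq, hcc, hs]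


lemma rpf_inv_quad_upper {d : ℕ} {A : Matrix (Fin d) (Fin d) ℝ} (hA : A.PosDef) {m : ℝ}
    (hm : 0 < m) (h : ∀ x, m * (x ⬝ᵥ x) ≤ x ⬝ᵥ (A *ᵥ x)) (y : Fin d → ℝ) :
    y ⬝ᵥ (A⁻¹ *ᵥ y) ≤ m⁻¹ * (y ⬝ᵥ y) := by
  set x : Fin d → ℝ := A⁻¹ *ᵥ y with hx
  have hAx : A *ᵥ x = y := by
    rw [hx, mulVec_mulVec, Matrix.mul_nonsing_inv _ hA.det_pos.ne'.isUnit, one_mulVec]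
  have h1 : m * (x ⬝ᵥ x) ≤ y ⬝ᵥ x := by
    have := h x
    rw [hAx] at this
    rwa [dotProduct_comm x y] at this
  have hq0 : 0 ≤ y ⬝ᵥ x :=
    le_trans (mul_nonneg hm.le (rpf_dot_self_nonneg x)) h1
  have hCS : (y ⬝ᵥ x) ^ 2 ≤ (y ⬝ᵥ y) * (x ⬝ᵥ x) := by
    have := Finset.sum_mul_sq_le_sq_mul_sq Finset.univ y x
    simpa [dotProduct, sq] using this
  -- goal : y ⬝ᵥ x ≤ m⁻¹ * (y ⬝ᵥ y)
  rcases eq_or_lt_of_le hq0 with hq | hq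
  · rw [← hq]
    exact mul_nonneg (inv_nonneg.mpr hm.le) (rpf_dot_self_nonneg y)
  · have hinv : m⁻¹ * m = 1 := inv_mul_cancel₀ hm.ne'
    have key : m * (y ⬝ᵥ x) ≤ y ⬝ᵥ y := by
      nlinarith [mul_le_mul_of_nonneg_left hCS hm.le,
        mul_le_mul_of_nonneg_left h1 (rpf_dot_self_nonneg y), hq]
    calc y ⬝ᵥ x = m⁻¹ * (m * (y ⬝ᵥ x)) := by rw [← mul_assoc, hinv, one_mul]
      _ ≤ m⁻¹ * (y ⬝ᵥ y) := mul_le_mul_of_nonneg_left key (inv_nonneg.mpr hm.le)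

lemma rpf_entry_abs_le {d : ℕ} {A : Matrix (Fin d) (Fin d) ℝ} (hsym : A.IsHermitian) {t : ℝ}
    (h0 : ∀ x : Fin d → ℝ, 0 ≤ x ⬝ᵥ (A *ᵥ x)) (h : ∀ x, x ⬝ᵥ (A *ᵥ x) ≤ t * (x ⬝ᵥ x))
    (i j : Fin d) : |A i j| ≤ t := by
  have hji : A j i = A i j := by
    have := congrFun (congrFun hsym.symm j) i
    simpa [Matrix.conjTranspose_apply] using this
  set ei : Fin d → ℝ := Pi.single i 1 with hei
  set ej : Fin d → ℝ := Pi.single j 1 with hej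
  have hii : ei ⬝ᵥ ei = 1 := by simp [hei, dotProduct, Pi.single_apply]
  have hjj : ej ⬝ᵥ ej = 1 := by simp [hej, dotProduct, Pi.single_apply]
  have ht0 : 0 ≤ t := by
    have h1 := h0 ei
    have h2 := h ei
    rw [hii, mul_one] at h2
    linarith
  by_cases hij : i = j
  · subst hij
    have h1 := h0 ei
    have h2 := h ei
    rw [hii, mul_one] at h2
    have hAii : ei ⬝ᵥ (A *ᵥ ei) = A i i := rpf_single_quad A i i
    rw [hAii] at h1 h2
    rw [abs_le]; constructor <;> linarith
  · have hij' : ei ⬝ᵥ ej = 0 := by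
      simp only [hei, hej, dotProduct, Pi.single_apply]
      rw [Finset.sum_eq_zero]
      intro k _
      by_cases hk : k = i <;> by_cases hk' : k = j <;>
        simp_all [hk] <;> simp_all
    have expand : ∀ c : ℝ, (ei + c • ej) ⬝ᵥ (A *ᵥ (ei + c • ej))
        = A i i + c * (A i j + A j i) + c * c * A j j := by
      intro c
      rw [mulVec_add, mulVec_smul, dotProduct_add, add_dotProduct, add_dotProduct,
        dotProduct_smul, smul_dotProduct, dotProduct_smul, smul_dotProduct]
      simp only [smul_eq_mul]
      rw [rpf_single_quad, rpf_single_quad, rpf_single_quad, rpf_single_quad]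
      ring
    have norm2 : ∀ c : ℝ, (ei + c • ej) ⬝ᵥ (ei + c • ej) = 1 + c * c := by
      intro c
      rw [dotProduct_add, add_dotProduct, add_dotProduct, dotProduct_smul, smul_dotProduct,
        dotProduct_smul, smul_dotProduct]
      simp only [smul_eq_mul]
      rw [hii, hjj, hij', dotProduct_comm ej ei, hij']
      ring
    have hp := h (ei + (1:ℝ) • ej)
    have hp0 := h0 (ei + (-1:ℝ) • ej)
    have hm := h (ei + (-1:ℝ) • ej)
    have hm0 := h0 (ei + (1:ℝ) • ej)
    rw [expand, norm2] at hp hm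
    rw [expand] at hp0 hm0
    rw [hji] at hp hp0 hm hm0
    rw [abs_le]; constructor <;> nlinarith

lemma rpf_step {d : ℕ} {R A : Matrix (Fin d) (Fin d) ℝ} (hR : R.PosDef) (hA : A.PosDef)
    {a : ℝ} (ha : 0 < a) :
    (a • (R * (R + A)⁻¹ * A)).PosDef ∧
      (a • (R * (R + A)⁻¹ * A))⁻¹ = a⁻¹ • (A⁻¹ + R⁻¹) := by
  have hRA : (R + A).PosDef := hR.add hA
  have hBpd : (a⁻¹ • (A⁻¹ + R⁻¹)).PosDef := rpf_posdef_smul (hA.inv.add hR.inv) (inv_pos.mpr ha)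
  have expand : R * (R + A)⁻¹ * (R + A) * R⁻¹
      = R * (R + A)⁻¹ + R * (R + A)⁻¹ * A * R⁻¹ := by
    rw [Matrix.mul_add (R * (R + A)⁻¹) R A, Matrix.add_mul,
      Matrix.mul_assoc (R * (R + A)⁻¹) R R⁻¹, Matrix.mul_nonsing_inv R hR.det_pos.ne'.isUnit,
      Matrix.mul_one]
  have hmul : (a • (R * (R + A)⁻¹ * A)) * (a⁻¹ • (A⁻¹ + R⁻¹)) = 1 := by
    rw [Matrix.smul_mul, Matrix.mul_smul, smul_smul, mul_inv_cancel₀ ha.ne', one_smul]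
    rw [Matrix.mul_add, Matrix.mul_assoc (R * (R + A)⁻¹) A A⁻¹,
      Matrix.mul_nonsing_inv _ hA.det_pos.ne'.isUnit, Matrix.mul_one, ← expand,
      Matrix.mul_assoc R (R + A)⁻¹ (R + A), Matrix.nonsing_inv_mul _ hRA.det_pos.ne'.isUnit,
      Matrix.mul_one, Matrix.mul_nonsing_inv R hR.det_pos.ne'.isUnit]
  have hSB : (a⁻¹ • (A⁻¹ + R⁻¹))⁻¹ = a • (R * (R + A)⁻¹ * A) := Matrix.inv_eq_left_inv hmul
  constructor
  · exact hSB ▸ hBpd.inv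
  · rw [← hSB, Matrix.nonsing_inv_nonsing_inv _ hBpd.det_pos.ne'.isUnit]

/-- Any bandwidth modulation tending to zero forces the RPF covariance to vanish:
if `α_n → 0` then `Σ_n → 0` (entrywise, i.e. for the product topology on matrices). -/
theorem stmt_11 {d : ℕ} (hd : 1 ≤ d)
    (R S0 : Matrix (Fin d) (Fin d) ℝ) (hR : R.PosDef) (hS0pd : S0.PosDef)
    (α : ℕ → ℝ) (hα0 : α 0 = 0) (hαnn : ∀ n, 0 ≤ α n)
    (hαlim : Tendsto α atTop (nhds 0))
    (S : ℕ → Matrix (Fin d) (Fin d) ℝ) (hS0 : S 0 = S0)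
    (hrec : ∀ n, S (n + 1) = (1 + α (n + 1)) • (R * (R + S n)⁻¹ * S n)) :
    Tendsto S atTop (nhds (0 : Matrix (Fin d) (Fin d) ℝ)) := by
  have hd0 : 0 < d := hd
  have ha : ∀ n, (0:ℝ) < 1 + α n := fun n => by have := hαnn n; linarith
  -- positive definiteness of all S n and the inverse recursion
  have hpd : ∀ n, (S n).PosDef := by
    intro n
    induction n with
    | zero => rw [hS0]; exact hS0pd
    | succ k ih =>
      rw [hrec k]
      exact (rpf_step hR ih (ha (k+1))).1
  have hTrec : ∀ n, (S (n+1))⁻¹ = (1 + α (n+1))⁻¹ • ((S n)⁻¹ + R⁻¹) := by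
    intro n
    rw [hrec n]
    exact (rpf_step hR (hpd n) (ha (n+1))).2
  -- lower bounds
  obtain ⟨r, hrpos, hrq⟩ := rpf_quad_lower hd0 hR.inv
  obtain ⟨s0, hs0pos, hs0q⟩ := rpf_quad_lower hd0 (hpd 0).inv
  -- the scalar sequence u
  set u : ℕ → ℝ := fun n => Nat.rec s0 (fun k uk => (1 + α (k+1))⁻¹ * (uk + r)) n with hu
  have hu0 : u 0 = s0 := rfl
  have huS : ∀ n, u (n+1) = (1 + α (n+1))⁻¹ * (u n + r) := fun n => rfl
  have hupos : ∀ n, 0 < u n := by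
    intro n
    induction n with
    | zero => exact hs0pos
    | succ k ih =>
      rw [huS k]
      exact mul_pos (inv_pos.mpr (ha (k+1))) (by linarith)
  -- quadratic form lower bound for (S n)⁻¹
  have hquad : ∀ n, ∀ x : Fin d → ℝ, u n * (x ⬝ᵥ x) ≤ x ⬝ᵥ ((S n)⁻¹ *ᵥ x) := by
    intro n
    induction n with
    | zero => intro x; rw [hu0]; exact hs0q x
    | succ k ih =>
      intro x
      rw [hTrec k, huS k, smul_mulVec, dotProduct_smul, smul_eq_mul, add_mulVec,
        dotProduct_add]
      have h1 := ih x
      have h2 := hrq x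
      have hinv : (0:ℝ) ≤ (1 + α (k+1))⁻¹ := (inv_pos.mpr (ha (k+1))).le
      calc (1 + α (k+1))⁻¹ * (u k + r) * (x ⬝ᵥ x)
          = (1 + α (k+1))⁻¹ * (u k * (x ⬝ᵥ x) + r * (x ⬝ᵥ x)) := by ring
        _ ≤ (1 + α (k+1))⁻¹ * (x ⬝ᵥ ((S k)⁻¹ *ᵥ x) + x ⬝ᵥ (R⁻¹ *ᵥ x)) :=
            mul_le_mul_of_nonneg_left (add_le_add h1 h2) hinv
  -- u tends to infinity
  have hut : Tendsto u atTop atTop := by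
    rw [tendsto_atTop]
    intro M0
    set M : ℝ := max M0 1 with hM
    have hMpos : 0 < M := lt_of_lt_of_le one_pos (le_max_right _ _)
    have hδ : 0 < min 1 (r / (4 * M)) :=
      lt_min one_pos (div_pos hrpos (by linarith))
    obtain ⟨N, hN⟩ := eventually_atTop.1 (hαlim.eventually_lt_const hδ)
    -- key induction
    have hind : ∀ j : ℕ, min M ((j:ℝ) * (r/4)) ≤ u (N + j) := by
      intro j
      induction j with
      | zero =>
        simp only [Nat.cast_zero, zero_mul, Nat.add_zero]
        exact le_trans (min_le_right _ _) (hupos N).le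
      | succ k ih =>
        have hα1 : α (N + k + 1) < min 1 (r / (4 * M)) := hN (N + k + 1) (by omega)
        have hα1a : α (N + k + 1) ≤ 1 := (lt_of_lt_of_le hα1 (min_le_left _ _)).le
        have hα1b : α (N + k + 1) * M < r / 4 := by
          have := lt_of_lt_of_le hα1 (min_le_right _ _)
          rw [lt_div_iff₀ (by linarith : (0:ℝ) < 4 * M)] at this
          nlinarith
        have ha0 : 0 ≤ α (N + k + 1) := hαnn _
        set b : ℝ := (1 + α (N + k + 1))⁻¹ with hb
        have hbpos : 0 < b := inv_pos.mpr (ha _)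
        have hbmul : b * (1 + α (N + k + 1)) = 1 := inv_mul_cancel₀ (ha _).ne'
        have h2b : 1 ≤ 2 * b := by nlinarith
        have hstep : u (N + k + 1) = b * (u (N + k) + r) := huS (N + k)
        rw [show N + (k+1) = (N + k) + 1 from rfl, hstep]
        by_cases hcase : M ≤ u (N + k)
        · refine le_trans (min_le_left _ _) ?_
          have hge : b * (M + r) ≤ b * (u (N + k) + r) :=
            mul_le_mul_of_nonneg_left (by linarith) hbpos.le
          have : M ≤ b * (M + r) := by nlinarith
          linarith
        · push_neg at hcase
          have hjk : (k:ℝ) * (r/4) ≤ u (N + k) := by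
            rcases min_cases M ((k:ℝ) * (r/4)) with ⟨h1, h2⟩ | ⟨h1, h2⟩
            · linarith [ih, h1 ▸ ih]
            · calc (k:ℝ) * (r/4) = min M ((k:ℝ) * (r/4)) := h1.symm
                _ ≤ u (N + k) := ih
          refine le_trans (min_le_right _ _) ?_
          have hun : 0 ≤ u (N + k) := (hupos _).le
          have haun : α (N + k + 1) * u (N + k) ≤ α (N + k + 1) * M :=
            mul_le_mul_of_nonneg_left hcase.le ha0
          have hincr : u (N + k) + r / 4 ≤ b * (u (N + k) + r) := by nlinarith
          push_cast
          linarith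
    obtain ⟨K, hK⟩ := exists_nat_ge (4 * M / r)
    refine eventually_atTop.2 ⟨N + K, fun n hn => ?_⟩
    obtain ⟨j, rfl⟩ : ∃ j, n = N + j := ⟨n - N, by omega⟩
    have hjK : (K:ℝ) ≤ (j:ℝ) := by exact_mod_cast Nat.cast_le.mpr (by omega)
    have hMj : M ≤ (j:ℝ) * (r/4) := by
      rw [div_le_iff₀ hrpos] at hK
      have : 4 * M ≤ (j:ℝ) * r := by nlinarith
      linarith
    have := hind j
    rw [min_eq_left hMj] at this
    exact le_trans (le_max_left _ _) this
  -- entrywise bound and conclusion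
  have hbound : ∀ n (i j : Fin d), |S n i j| ≤ (u n)⁻¹ := by
    intro n i j
    have hpdn := hpd n
    have hq := rpf_inv_quad_upper hpdn.inv (hupos n) (hquad n)
    rw [Matrix.nonsing_inv_nonsing_inv _ hpdn.det_pos.ne'.isUnit] at hq
    refine rpf_entry_abs_le hpdn.isHermitian (fun x => ?_) hq i j
    have := hpdn.posSemidef.dotProduct_mulVec_nonneg x
    simpa using this
  have hinv0 : Tendsto (fun n => (u n)⁻¹) atTop (nhds (0:ℝ)) := hut.inv_tendsto_atTop
  have hentry : ∀ i j : Fin d, Tendsto (fun n => S n i j) atTop (nhds (0:ℝ)) := by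
    intro i j
    exact squeeze_zero_norm (fun n => by
      simpa [Real.norm_eq_abs] using hbound n i j) hinv0
  apply tendsto_pi_nhds.2
  intro i
  rw [tendsto_pi_nhds]
  intro j
  exact hentry i j
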